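/- Let A be a nonzero Hermitian matrix with n^+ positive and n^- negative eigenvalues (counted with multiplicity). If there exist orthogonal projectors Q_0,...,Q_{c-1} forming a resolution of the identity with Σ_{k∈[c]} Q_k A Q_k = 0, then c ≥ 1 + max(n^+/n^-, n^- /n^+). -/

import Mathlib

open Matrix BigOperators Finset

private lemma sum_mulVec' {m : ℕ} {ι : Type*} (s : Finset ι)
    (M : ι → Matrix (Fin m) (Fin m) ℂ) (v : Fin m → ℂ) :
    ∑ k ∈ s, M k *ᵥ v = (∑ k ∈ s, M k) *ᵥ v := by
  ext i
  simp only [Finset.sum_apply, Matrix.mulVec, dotProduct, Matrix.sum_apply,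
    Finset.sum_mul]
  rw [Finset.sum_comm]

private lemma dot_sum' {m : ℕ} {ι : Type*} (s : Finset ι)
    (v : Fin m → ℂ) (u : ι → Fin m → ℂ) :
    v ⬝ᵥ (∑ k ∈ s, u k) = ∑ k ∈ s, v ⬝ᵥ u k := by
  simp only [dotProduct, Finset.sum_apply, Finset.mul_sum]
  rw [Finset.sum_comm]

private lemma quad' {m : ℕ} (V : Matrix (Fin m) (Fin m) ℂ) (d : Fin m → ℂ) (y : Fin m → ℂ) :
    star y ⬝ᵥ ((V * diagonal d * star V) *ᵥ y)
      = ∑ i, d i * ((Complex.normSq ((star V *ᵥ y) i) : ℝ) : ℂ) := by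
  set w := star V *ᵥ y with hw
  have h1 : star y ᵥ* V = star w := by
    rw [hw, star_mulVec]
    simp [Matrix.star_eq_conjTranspose]
  rw [dotProduct_mulVec, ← vecMul_vecMul, ← vecMul_vecMul, h1, ← dotProduct_mulVec, ← hw]
  simp only [dotProduct, vecMul_diagonal]
  refine Finset.sum_congr rfl fun i _ => ?_
  have : (star w) i * d i * w i = d i * (w i * (starRingEnd ℂ) (w i)) := by
    simp only [Pi.star_apply, Complex.star_def]; ring
  rw [this, Complex.mul_conj]

private lemma inertia_aux {m c' : ℕ} (lam : Fin m → ℝ) (U : Matrix (Fin m) (Fin m) ℂ)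
    (hU : star U * U = 1)
    (Q : Fin (c' + 1) → Matrix (Fin m) (Fin m) ℂ)
    (hherm : ∀ k, (Q k).IsHermitian)
    (hsum : ∑ k, Q k = 1)
    (hpinch : ∑ k, Q k * (U * diagonal (fun i => (lam i : ℂ)) * star U) * Q k = 0) :
    (univ.filter fun i => 0 < lam i).card ≤ c' * (univ.filter fun i => lam i < 0).card := by
  classical
  set P := univ.filter fun i : Fin m => 0 < lam i with hPdef
  set N := univ.filter fun i : Fin m => lam i < 0 with hNdef
  let ext : (↥P → ℂ) →ₗ[ℂ] (Fin m → ℂ) :=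
    { toFun := fun x i => if h : i ∈ P then x ⟨i, h⟩ else 0
      map_add' := by intro a b; funext i; by_cases h : i ∈ P <;> simp [h]
      map_smul' := by intro c a; funext i; by_cases h : i ∈ P <;> simp [h] }
  let Φ : (↥P → ℂ) →ₗ[ℂ] (Fin c' → ↥N → ℂ) :=
    { toFun := fun x k j => ((star U * Q k.succ * U) *ᵥ ext x) (j : Fin m)
      map_add' := by intro a b; funext k j; simp [Matrix.mulVec_add]
      map_smul' := by intro c a; funext k j; simp [Matrix.mulVec_smul] }
  have hinj : Function.Injective Φ := by
    rw [← LinearMap.ker_eq_bot, LinearMap.ker_eq_bot']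
    intro x hx
    set xt : Fin m → ℂ := ext x with hxt
    set w : Fin (c' + 1) → Fin m → ℂ := fun k => (star U * Q k * U) *ᵥ xt with hwdef
    have hsumw : ∑ k, w k = xt := by
      rw [hwdef, sum_mulVec']
      have : ∑ k, star U * Q k * U = 1 := by
        rw [← Finset.sum_mul, ← Finset.mul_sum, hsum, mul_one, hU]
      rw [this, one_mulVec]
    have hxtnP : ∀ i, i ∉ P → xt i = 0 := by
      intro i h; simp only [hxt]; exact dif_neg h
    have hPN : ∀ i, i ∈ N → i ∉ P := by
      intro i hi hip
      rw [hNdef, Finset.mem_filter] at hi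
      rw [hPdef, Finset.mem_filter] at hip
      exact absurd hip.2 (not_lt.mpr hi.2.le)
    have hwN : ∀ k, ∀ i ∈ N, w k i = 0 := by
      have hsucc : ∀ (k : Fin c') (i : Fin m) (hi : i ∈ N), w k.succ i = 0 := by
        intro k i hi
        have := congrFun (congrFun hx k) ⟨i, hi⟩
        simpa [Φ, hwdef] using this
      intro k
      refine Fin.cases ?_ (fun k i hi => hsucc k i hi) k
      intro i hi
      have h1 : w 0 i + ∑ k : Fin c', w k.succ i = xt i := by
        have h := congrFun hsumw i
        rw [Finset.sum_apply, Fin.sum_univ_succ] at h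
        exact h
      have h2 : ∑ k : Fin c', w k.succ i = 0 :=
        Finset.sum_eq_zero fun k _ => hsucc k i hi
      have h3 : xt i = 0 := hxtnP i (hPN i hi)
      rw [h2, add_zero, h3] at h1
      exact h1
    -- quadratic identity
    set y : Fin m → ℂ := U *ᵥ xt with hy
    have hwy : ∀ k, (star (Q k * U)) *ᵥ y = w k := by
      intro k
      rw [hy, mulVec_mulVec, hwdef]
      have hQ : star (Q k) = Q k := by
        rw [Matrix.star_eq_conjTranspose, hherm k]
      rw [StarMul.star_mul, hQ]
    have hquadC : ∑ k, ∑ i, (lam i : ℂ) * ((Complex.normSq (w k i) : ℝ) : ℂ) = 0 := by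
      have h0 : star y ⬝ᵥ ((∑ k, Q k * (U * diagonal (fun i => (lam i : ℂ)) * star U) * Q k) *ᵥ y)
          = 0 := by
        rw [hpinch, zero_mulVec, dotProduct_zero]
      rw [← sum_mulVec', dot_sum'] at h0
      have hterm : ∀ k : Fin (c' + 1),
          star y ⬝ᵥ ((Q k * (U * diagonal (fun i => (lam i : ℂ)) * star U) * Q k) *ᵥ y)
            = ∑ i, (lam i : ℂ) * ((Complex.normSq (w k i) : ℝ) : ℂ) := by
        intro k
        have hM : Q k * (U * diagonal (fun i => (lam i : ℂ)) * star U) * Q k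
            = (Q k * U) * diagonal (fun i => (lam i : ℂ)) * star (Q k * U) := by
          have hQ : star (Q k) = Q k := by
            rw [Matrix.star_eq_conjTranspose, hherm k]
          rw [StarMul.star_mul, hQ]
          noncomm_ring
        rw [hM, quad']
        refine Finset.sum_congr rfl fun i _ => ?_
        rw [hwy k]
      rw [← h0]
      exact (Finset.sum_congr rfl fun k _ => (hterm k).symm)
    have hquad : ∑ k, ∑ i, lam i * Complex.normSq (w k i) = 0 := by
      have : ((∑ k, ∑ i, lam i * Complex.normSq (w k i) : ℝ) : ℂ) = 0 := by
        push_cast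
        rw [← hquadC]
      exact_mod_cast this
    have hwP : ∀ k, ∀ i ∈ P, w k i = 0 := by
      have hnn : ∀ (k : Fin (c' + 1)) (i : Fin m), 0 ≤ lam i * Complex.normSq (w k i) := by
        intro k i
        by_cases hp : i ∈ P
        · rw [hPdef, Finset.mem_filter] at hp
          exact mul_nonneg hp.2.le (Complex.normSq_nonneg _)
        · by_cases hn : i ∈ N
          · rw [hwN k i hn]; simp
          · have h1 : ¬ 0 < lam i := by
              rw [hPdef, Finset.mem_filter] at hp; simpa using hp
            have h2 : ¬ lam i < 0 := by
              rw [hNdef, Finset.mem_filter] at hn; simpa using hn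
            have : lam i = 0 := le_antisymm (not_lt.mp h1) (not_lt.mp h2)
            rw [this, zero_mul]
      have houter : ∀ k ∈ (univ : Finset (Fin (c' + 1))),
          ∑ i, lam i * Complex.normSq (w k i) = 0 := by
        rw [← Finset.sum_eq_zero_iff_of_nonneg]
        · exact hquad
        · intro k _
          exact Finset.sum_nonneg fun i _ => hnn k i
      intro k i hi
      have hinner : lam i * Complex.normSq (w k i) = 0 := by
        have := (Finset.sum_eq_zero_iff_of_nonneg (fun i _ => hnn k i)).mp
          (houter k (Finset.mem_univ k)) i (Finset.mem_univ i)
        exact this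
      rw [hPdef, Finset.mem_filter] at hi
      have := mul_eq_zero.mp hinner
      rcases this with h | h
      · exact absurd h hi.2.ne'
      · exact Complex.normSq_eq_zero.mp h
    funext j
    have hj : (j : Fin m) ∈ P := j.2
    have hxtj : xt (j : Fin m) = x j := by
      simp only [hxt, ext, LinearMap.coe_mk, AddHom.coe_mk, dif_pos hj, Subtype.coe_eta]
    have : xt (j : Fin m) = 0 := by
      rw [← hsumw, Finset.sum_apply]
      exact Finset.sum_eq_zero fun k _ => hwP k _ hj
    rw [hxtj] at this
    exact this
  have hle := LinearMap.finrank_le_finrank_of_injective hinj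
  have h1 : Module.finrank ℂ (↥P → ℂ) = P.card := by
    rw [Module.finrank_fintype_fun_eq_card, Fintype.card_coe]
  have h2 : Module.finrank ℂ (Fin c' → ↥N → ℂ) = c' * N.card := by
    rw [Module.finrank_pi_fintype]
    simp [Module.finrank_fintype_fun_eq_card, Fintype.card_coe, Finset.sum_const]
  rw [h1, h2] at hle
  exact hle

theorem inertia_bound_pinching {m c : ℕ}
    (A : Matrix (Fin m) (Fin m) ℂ) (hA : A.IsHermitian) (hAne : A ≠ 0)
    (Q : Fin c → Matrix (Fin m) (Fin m) ℂ)
    (hherm : ∀ k, (Q k).IsHermitian)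
    (hidem : ∀ k, Q k * Q k = Q k)
    (hsum : ∑ k, Q k = 1)
    (hpinch : ∑ k, Q k * A * Q k = 0) :
    1 + max
        (((univ.filter fun i => 0 < hA.eigenvalues i).card : ℝ) /
          ((univ.filter fun i => hA.eigenvalues i < 0).card : ℝ))
        (((univ.filter fun i => hA.eigenvalues i < 0).card : ℝ) /
          ((univ.filter fun i => 0 < hA.eigenvalues i).card : ℝ))
      ≤ (c : ℝ) := by
  classical
  have hm : 0 < m := by
    rcases Nat.eq_zero_or_pos m with h | h
    · subst h
      exact absurd (by ext i j; exact i.elim0) hAne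
    · exact h
  obtain ⟨c', rfl⟩ : ∃ c', c = c' + 1 := by
    cases c with
    | zero =>
      exfalso
      have h0 : (0 : Matrix (Fin m) (Fin m) ℂ) = 1 := by simpa using hsum
      have := congrFun (congrFun h0 ⟨0, hm⟩) ⟨0, hm⟩
      simp [Matrix.one_apply] at this
    | succ n => exact ⟨n, rfl⟩
  set lam := hA.eigenvalues with hlam
  set U : Matrix (Fin m) (Fin m) ℂ := (hA.eigenvectorUnitary : Matrix (Fin m) (Fin m) ℂ) with hUdef
  have hUU : star U * U = 1 := hA.eigenvectorUnitary.2.1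
  have hAeq : A = U * diagonal (fun i => (lam i : ℂ)) * star U := by
    have := hA.spectral_theorem
    rw [Unitary.conjStarAlgAut_apply] at this
    convert this using 3
    all_goals rfl
  have key1 := inertia_aux lam U hUU Q hherm hsum (by rw [← hAeq]; exact hpinch)
  have hnegdiag : U * diagonal (fun i => ((- lam i : ℝ) : ℂ)) * star U = -A := by
    have hd : (fun i => ((- lam i : ℝ) : ℂ)) = fun i => -((lam i : ℝ) : ℂ) := by
      funext i; push_cast; ring
    rw [hd, show Matrix.diagonal (fun i => -((lam i : ℝ) : ℂ))
        = -Matrix.diagonal (fun i => ((lam i : ℝ) : ℂ)) from (Matrix.diagonal_neg _).symm,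
      hAeq, Matrix.mul_neg, Matrix.neg_mul]
  have key2 := inertia_aux (fun i => -lam i) U hUU Q hherm hsum (by
    rw [hnegdiag]
    simp only [Matrix.mul_neg, Matrix.neg_mul, Finset.sum_neg_distrib, hpinch, neg_zero])
  have e1 : (univ.filter fun i => 0 < -lam i) = (univ.filter fun i => lam i < 0) :=
    Finset.filter_congr fun i _ => by simp [neg_pos]
  have e2 : (univ.filter fun i => -lam i < 0) = (univ.filter fun i => 0 < lam i) :=
    Finset.filter_congr fun i _ => by simp [neg_lt, neg_zero]
  rw [e1, e2] at key2
  set p := (univ.filter fun i => 0 < lam i).card with hp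
  set q := (univ.filter fun i => lam i < 0).card with hq
  have keyA : p ≤ c' * q := key1
  have keyB : q ≤ c' * p := key2
  have hq0 : 0 < q := by
    rcases Nat.eq_zero_or_pos q with h | h
    · exfalso
      have hp0 : p = 0 := by
        rw [h, Nat.mul_zero] at keyA
        omega
      have hallP : ∀ i : Fin m, ¬ 0 < lam i := by
        intro i hi
        have : i ∈ univ.filter fun i => 0 < lam i := by
          simp [Finset.mem_filter, hi]
        rw [Finset.card_eq_zero.mp hp0] at this
        exact absurd this (Finset.notMem_empty i)
      have hallN : ∀ i : Fin m, ¬ lam i < 0 := by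
        intro i hi
        have : i ∈ univ.filter fun i => lam i < 0 := by
          simp [Finset.mem_filter, hi]
        rw [Finset.card_eq_zero.mp h] at this
        exact absurd this (Finset.notMem_empty i)
      have hall : ∀ i, lam i = 0 := fun i =>
        le_antisymm (not_lt.mp (hallP i)) (not_lt.mp (hallN i))
      have : A = 0 := by
        rw [hAeq]
        have : (fun i => ((lam i : ℝ) : ℂ)) = fun _ => (0 : ℂ) := by
          funext i; rw [hall i]; simp
        rw [this]
        simp [Matrix.diagonal_zero]
      exact hAne this
    · exact h
  have hp0 : 0 < p := by
    rcases Nat.eq_zero_or_pos p with h | h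
    · exfalso
      rw [h, Nat.mul_zero] at keyB
      omega
    · exact h
  have hqR : (0 : ℝ) < q := by exact_mod_cast hq0
  have hpR : (0 : ℝ) < p := by exact_mod_cast hp0
  have h1R : (p : ℝ) ≤ (c' : ℝ) * q := by exact_mod_cast keyA
  have h2R : (q : ℝ) ≤ (c' : ℝ) * p := by exact_mod_cast keyB
  have hmax : max ((p : ℝ) / q) ((q : ℝ) / p) ≤ (c' : ℝ) :=
    max_le ((div_le_iff₀ hqR).mpr h1R) ((div_le_iff₀ hpR).mpr h2R)
  push_cast
  linarith
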